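/- Let w ≥ 4 and 0 ≤ s ≤ w−2. Then C·B^s·C = 0. -/
import Mathlib


open Matrix

/-- The matrix `B` of MT-type recursions: first row zero, row `i` (0-indexed,
`1 ≤ i ≤ w-2`) is the standard basis row vector with a `1` in column `i+1`,
and the last row is `(a_{w-1}, …, a_0)` (stored as `a 0, …, a (w-1)`). -/
def mtB (w : ℕ) (a : Fin w → ZMod 2) : Matrix (Fin w) (Fin w) (ZMod 2) :=
  Matrix.of fun i j =>
    if (i : ℕ) = w - 1 then a j
    else if 1 ≤ (i : ℕ) ∧ (j : ℕ) = (i : ℕ) + 1 then 1 else 0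

/-- The matrix `C`: its only nonzero entry is a `1` in position `(1,2)` (1-indexed). -/
def mtC (w : ℕ) : Matrix (Fin w) (Fin w) (ZMod 2) :=
  Matrix.of fun i j => if (i : ℕ) = 0 ∧ (j : ℕ) = 1 then 1 else 0

/-- `Q_k = Σ_{i=0}^{k-1} B^i · C · B^{k-1-i}`. -/
def mtQ (w : ℕ) (a : Fin w → ZMod 2) (k : ℕ) : Matrix (Fin w) (Fin w) (ZMod 2) :=
  ∑ i ∈ Finset.range k, (mtB w a) ^ i * mtC w * (mtB w a) ^ (k - 1 - i)

/-- `C · B^s · C = 0` for `s ≤ w - 2`. -/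
lemma key (w : ℕ) (hw : 4 ≤ w) (a : Fin w → ZMod 2) :
    ∀ s, s ≤ w - 2 → ∀ j : Fin w,
    ((mtB w a) ^ s) ⟨1, by omega⟩ j = if (j : ℕ) = 1 + s then 1 else 0 := by
  intro s
  induction s with
  | zero =>
    intro _ j
    simp [Matrix.one_apply, Fin.ext_iff, eq_comm]
  | succ n ih =>
    intro hs j
    have hn : n ≤ w - 2 := by omega
    rw [pow_succ, Matrix.mul_apply]
    have : ∀ k : Fin w, ((mtB w a) ^ n) ⟨1, by omega⟩ k * (mtB w a) k j
        = if k = (⟨1 + n, by omega⟩ : Fin w) then (mtB w a) k j else 0 := by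
      intro k
      rw [ih hn k]
      by_cases h : (k : ℕ) = 1 + n
      · simp [h, Fin.ext_iff]
      · simp [h, Fin.ext_iff]
    simp only [this]
    rw [Finset.sum_ite_eq' Finset.univ]
    simp only [Finset.mem_univ, if_true]
    have h1 : (1 + n : ℕ) ≠ w - 1 := by omega
    simp only [mtB, Matrix.of_apply, h1, if_false]
    have : (1 ≤ 1 + n ∧ (j : ℕ) = 1 + n + 1) ↔ (j : ℕ) = 1 + (n + 1) := by omega
    simp only [this]

theorem stmt2 (w : ℕ) (hw : 4 ≤ w) (a : Fin w → ZMod 2) (s : ℕ) (hs : s ≤ w - 2) :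
    mtC w * (mtB w a) ^ s * mtC w = 0 := by
  ext i j
  rw [Matrix.mul_apply]
  simp only [Matrix.zero_apply]
  apply Finset.sum_eq_zero
  intro l _
  rw [Matrix.mul_apply]
  by_cases hl : (l : ℕ) = 0 ∧ (j : ℕ) = 1
  · have hsum : ∀ k : Fin w, mtC w i k * ((mtB w a) ^ s) k l
        = if k = (⟨1, by omega⟩ : Fin w) ∧ (i : ℕ) = 0 then ((mtB w a) ^ s) k l else 0 := by
      intro k
      simp only [mtC, Matrix.of_apply]
      by_cases h : (i : ℕ) = 0 ∧ (k : ℕ) = 1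
      · simp [h.1, h.2, Fin.ext_iff]
      · rw [if_neg h]
        have : ¬ (k = (⟨1, by omega⟩ : Fin w) ∧ (i : ℕ) = 0) := by
          simp only [Fin.ext_iff]; tauto
        rw [if_neg this, zero_mul]
    simp only [hsum]
    by_cases hi : (i : ℕ) = 0
    · simp only [hi, and_true]
      rw [Finset.sum_ite_eq' Finset.univ]
      simp only [Finset.mem_univ, if_true]
      rw [key w hw a s hs l]
      have : (l : ℕ) ≠ 1 + s := by omega
      simp [this]
    · simp [hi]
  · simp only [mtC, Matrix.of_apply]
    rw [if_neg (by exact fun h => hl ⟨h.1, h.2⟩)]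
    simp
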